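/- arXiv:1509.05668 — 3 statements merged into one kernel-verified Lean document; each statement's English description precedes it below -/
import Mathlib

section
/- Let g : [0,Δ] → ℝ be continuous with Δ > 0 and suppose lim_{x→0+} g(x)/x exists. Then for every ε > 0 there exists a polynomial g_N with g_N(0) = 0 such that |g(x) - g_N(x)| ≤ ε x for all x ∈ [0,Δ]. -/
open Set

/-- Relative Weierstrass approximation: if `g : [0,Δ] → ℝ` is continuous and
`lim_{x→0+} g(x)/x` exists, then for every `ε > 0` there is a polynomial `g_N` with
`g_N(0) = 0` and `|g(x) - g_N(x)| ≤ ε x` for all `x ∈ [0,Δ]`. -/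
theorem relative_weierstrass_approximation
    (Δ : ℝ) (hΔ : 0 < Δ) (g : ℝ → ℝ) (hg : ContinuousOn g (Icc 0 Δ))
    (hlim : ∃ L : ℝ, Filter.Tendsto (fun x => g x / x) (nhdsWithin 0 (Ioi 0)) (nhds L)) :
    ∀ ε > (0 : ℝ), ∃ gN : Polynomial ℝ, gN.eval 0 = 0 ∧
      ∀ x ∈ Icc (0 : ℝ) Δ, |g x - gN.eval x| ≤ ε * x := by
  obtain ⟨L, hL⟩ := hlim
  intro ε hε
  -- the filter nhdsWithin 0 (Ioc 0 Δ)
  have hne : (nhdsWithin (0:ℝ) (Ioc 0 Δ)).NeBot := by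
    apply mem_closure_iff_nhdsWithin_neBot.mp
    rw [closure_Ioc hΔ.ne]
    exact ⟨le_refl 0, hΔ.le⟩
  have hle : nhdsWithin (0:ℝ) (Ioc 0 Δ) ≤ nhdsWithin 0 (Ioi 0) :=
    nhdsWithin_mono _ Ioc_subset_Ioi_self
  have hle2 : nhdsWithin (0:ℝ) (Ioc 0 Δ) ≤ nhdsWithin 0 (Icc 0 Δ) :=
    nhdsWithin_mono _ Ioc_subset_Icc_self
  -- g 0 = 0
  have hg0 : g 0 = 0 := by
    have h1 : Filter.Tendsto g (nhdsWithin (0:ℝ) (Ioc 0 Δ)) (nhds 0) := by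
      have : Filter.Tendsto (fun x => (g x / x) * x) (nhdsWithin (0:ℝ) (Ioc 0 Δ)) (nhds (L * 0)) :=
        (hL.comp (Filter.tendsto_id.mono_left hle)).mul
          ((continuous_id.tendsto 0).mono_left nhdsWithin_le_nhds)
      rw [mul_zero] at this
      apply this.congr'
      filter_upwards [self_mem_nhdsWithin] with x hx
      exact div_mul_cancel₀ _ hx.1.ne'
    have h2 : Filter.Tendsto g (nhdsWithin (0:ℝ) (Ioc 0 Δ)) (nhds (g 0)) :=
      (hg 0 ⟨le_refl 0, hΔ.le⟩).mono_left hle2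
    exact tendsto_nhds_unique h2 h1
  -- F : continuous extension of g x / x
  set F : ℝ → ℝ := fun x => if x = 0 then L else g x / x with hF
  have hFx : ∀ x ∈ Icc (0:ℝ) Δ, g x = x * F x := by
    intro x hx
    rcases eq_or_lt_of_le hx.1 with h | h
    · simp [← h, hg0]
    · simp only [hF]
      rw [if_neg h.ne']
      field_simp
  have hFcont : ContinuousOn F (Icc 0 Δ) := by
    intro x hx
    rcases eq_or_lt_of_le hx.1 with h | h
    · -- x = 0
      subst h
      have : Filter.Tendsto F (nhdsWithin (0:ℝ) (Icc 0 Δ)) (nhds L) := by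
        have hsplit : Icc (0:ℝ) Δ = {0} ∪ Ioc 0 Δ := by
          ext y; constructor
          · rintro ⟨h1, h2⟩
            rcases eq_or_lt_of_le h1 with h | h
            · exact Or.inl (by simp [← h])
            · exact Or.inr ⟨h, h2⟩
          · rintro (h | h)
            · simp at h; simp [h, hΔ.le]
            · exact ⟨h.1.le, h.2⟩
        rw [hsplit, nhdsWithin_union]
        apply Filter.Tendsto.sup
        · rw [nhdsWithin_singleton]
          have := tendsto_pure_nhds F 0
          simpa [hF] using this
        · apply Filter.Tendsto.congr' _ (hL.mono_left hle)
          filter_upwards [self_mem_nhdsWithin] with y hy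
          simp [hF, hy.1.ne']
      unfold ContinuousWithinAt
      convert this
      simp [hF]
    · -- x > 0
      have : ContinuousWithinAt (fun y => g y / y) (Icc 0 Δ) x :=
        (hg x hx).div ((continuous_id.continuousOn) x hx) h.ne'
      apply this.congr_of_eventuallyEq_of_mem _ hx
      filter_upwards [self_mem_nhdsWithin, eventually_nhdsWithin_of_eventually_nhds (eventually_gt_nhds h)] with y _ hy
      simp [hF, (show (0:ℝ) < y from hy).ne']
  obtain ⟨P, hP⟩ := exists_polynomial_near_of_continuousOn 0 Δ F hFcont ε hε
  refine ⟨Polynomial.X * P, by simp, ?_⟩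
  intro x hx
  rw [hFx x hx]
  simp only [Polynomial.eval_mul, Polynomial.eval_X]
  rw [← mul_sub, abs_mul, abs_of_nonneg hx.1, mul_comm (ε) x]
  apply mul_le_mul_of_nonneg_left _ hx.1
  rw [abs_sub_comm]
  exact (hP x hx).le
end

section
/- Let SNR > 0 and define C(ν) = (1/(2π)) ∬_{ℝ²} (1/2) ln⁺(ν / N₁(t,ω)) dt dω and S(ν) = ∬_{ℝ²} (ν - N₁(t,ω))⁺ dt dω with N₁(t,ω) = (θ²/(2π)) exp(γ^{-2}t² + γ²ω²). If ν is chosen so that S(ν) = 2πθ²·SNR, then C(ν) = (1/8)[W₀((4π·SNR - 1)/e) + 1]², where W₀ is the principal branch of the Lambert W function. -/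
open MeasureTheory Real

private lemma polar_symm_sq (p : ℝ × ℝ) :
    (polarCoord.symm p).1 ^ 2 + (polarCoord.symm p).2 ^ 2 = p.1 ^ 2 := by
  have h : polarCoord.symm p = (p.1 * Real.cos p.2, p.1 * Real.sin p.2) := rfl
  rw [h]
  have hs := Real.sin_sq_add_cos_sq p.2
  dsimp
  linear_combination p.1 ^ 2 * hs

private lemma polar_key (g : ℝ → ℝ) :
    (∫ z : ℝ × ℝ, g (z.1 ^ 2 + z.2 ^ 2)) = π * ∫ u in Set.Ioi (0:ℝ), g u := by
  rw [← integral_comp_polarCoord_symm (fun z : ℝ × ℝ => g (z.1 ^ 2 + z.2 ^ 2))]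
  have htarget : polarCoord.target = Set.Ioi (0:ℝ) ×ˢ Set.Ioo (-π) π := rfl
  have hcong : ∀ p ∈ polarCoord.target,
      p.1 • (fun z : ℝ × ℝ => g (z.1 ^ 2 + z.2 ^ 2)) (polarCoord.symm p)
        = (fun r : ℝ => r * g (r ^ 2)) p.1 * (fun _ : ℝ => (1:ℝ)) p.2 := by
    intro p _
    simp only [polar_symm_sq p, smul_eq_mul, mul_one]
  rw [setIntegral_congr_fun polarCoord.open_target.measurableSet hcong, htarget]
  have hprod := MeasureTheory.setIntegral_prod_mul (μ := (volume : Measure ℝ))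
      (ν := (volume : Measure ℝ)) (fun r : ℝ => r * g (r ^ 2)) (fun _ : ℝ => (1:ℝ))
      (Set.Ioi 0) (Set.Ioo (-π) π)
  rw [Measure.volume_eq_prod ℝ ℝ, hprod]
  have h1 : (∫ _ in Set.Ioo (-π) π, (1:ℝ)) = 2 * π := by
    simp [Real.volume_Ioo]
    rw [max_eq_left (by positivity)]
    ring
  have h2 : (∫ r in Set.Ioi (0:ℝ), r * g (r ^ 2)) = (1/2) * ∫ u in Set.Ioi (0:ℝ), g u := by
    have key := integral_comp_rpow_Ioi g (p := 2) two_ne_zero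
    have hEq : ∀ x ∈ Set.Ioi (0:ℝ),
        (|(2:ℝ)| * x ^ ((2:ℝ) - 1)) • g (x ^ (2:ℝ)) = 2 * (x * g (x ^ 2)) := by
      intro x _
      rw [Real.rpow_two, show ((2:ℝ) - 1) = 1 by norm_num, Real.rpow_one]
      simp [abs_of_nonneg, smul_eq_mul]
      ring
    rw [setIntegral_congr_fun measurableSet_Ioi hEq, integral_const_mul] at key
    linarith
  rw [h1, h2]
  ring

private lemma scale_key (γ : ℝ) (hγ : γ ≠ 0) (g : ℝ → ℝ)
    (h1 : Integrable (fun z : ℝ × ℝ => g ((γ⁻¹ * z.1) ^ 2 + (γ * z.2) ^ 2)))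
    (h2 : Integrable (fun z : ℝ × ℝ => g (z.1 ^ 2 + z.2 ^ 2))) :
    (∫ z : ℝ × ℝ, g ((γ⁻¹ * z.1) ^ 2 + (γ * z.2) ^ 2))
      = ∫ z : ℝ × ℝ, g (z.1 ^ 2 + z.2 ^ 2) := by
  rw [Measure.volume_eq_prod ℝ ℝ] at h1 h2
  rw [show (volume : Measure (ℝ × ℝ)) = (volume : Measure ℝ).prod volume from Measure.volume_eq_prod ℝ ℝ,
    integral_prod _ h1, integral_prod _ h2]
  have inner : ∀ t : ℝ, (∫ ω : ℝ, g ((γ⁻¹ * t) ^ 2 + (γ * ω) ^ 2))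
      = |γ⁻¹| • ∫ w : ℝ, g ((γ⁻¹ * t) ^ 2 + w ^ 2) :=
    fun t => MeasureTheory.Measure.integral_comp_mul_left (fun w => g ((γ⁻¹ * t) ^ 2 + w ^ 2)) γ
  simp_rw [inner]
  rw [integral_smul]
  have outer := MeasureTheory.Measure.integral_comp_mul_left
    (fun s : ℝ => ∫ w : ℝ, g (s ^ 2 + w ^ 2)) γ⁻¹
  rw [outer, smul_smul, inv_inv, abs_inv, inv_mul_cancel₀ (abs_ne_zero.mpr hγ), one_smul]

private lemma integrable_aux (a b L : ℝ) (ha : 0 < a) (hb : 0 < b) (g : ℝ → ℝ)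
    (hg : Continuous g) (hg0 : ∀ u, L ≤ u → g u = 0) :
    Integrable (fun z : ℝ × ℝ => g ((a * z.1) ^ 2 + (b * z.2) ^ 2)) := by
  have hc : Continuous fun z : ℝ × ℝ => g ((a * z.1) ^ 2 + (b * z.2) ^ 2) := by
    apply hg.comp
    fun_prop
  apply hc.integrable_of_hasCompactSupport
  set S := Real.sqrt (max L 0) with hS
  have hS2 : S ^ 2 = max L 0 := Real.sq_sqrt (le_max_right L 0)
  have hSnn : 0 ≤ S := Real.sqrt_nonneg _
  apply HasCompactSupport.intro (K := Set.Icc (-(S/a)) (S/a) ×ˢ Set.Icc (-(S/b)) (S/b))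
    ((isCompact_Icc).prod isCompact_Icc)
  intro z hz
  apply hg0
  have hL : max L 0 ≤ (a * z.1) ^ 2 + (b * z.2) ^ 2 → L ≤ (a * z.1) ^ 2 + (b * z.2) ^ 2 :=
    fun h => le_trans (le_max_left L 0) h
  apply hL
  have hz' : ¬(-(S/a) ≤ z.1 ∧ z.1 ≤ S/a) ∨ ¬(-(S/b) ≤ z.2 ∧ z.2 ≤ S/b) := by
    by_contra hcon
    push_neg at hcon
    exact hz (Set.mem_prod.mpr ⟨Set.mem_Icc.mpr hcon.1, Set.mem_Icc.mpr hcon.2⟩)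
  rcases hz' with h | h
  · have habs : S / a < |z.1| := by
      rcases not_and_or.mp h with h' | h'
      · push_neg at h'
        have hlt : S / a < -z.1 := by linarith
        exact lt_of_lt_of_le hlt (neg_le_abs z.1)
      · push_neg at h'
        exact lt_of_lt_of_le h' (le_abs_self z.1)
    have : S < a * |z.1| := by
      rw [div_lt_iff₀ ha] at habs; linarith [mul_comm a |z.1|]
    have h1 : S ^ 2 < (a * |z.1|) ^ 2 := by nlinarith
    have h2 : (a * |z.1|) ^ 2 = (a * z.1) ^ 2 := by
      rw [mul_pow, mul_pow, sq_abs]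
    nlinarith [sq_nonneg (b * z.2)]
  · have habs : S / b < |z.2| := by
      rcases not_and_or.mp h with h' | h'
      · push_neg at h'
        have hlt : S / b < -z.2 := by linarith
        exact lt_of_lt_of_le hlt (neg_le_abs z.2)
      · push_neg at h'
        exact lt_of_lt_of_le h' (le_abs_self z.2)
    have : S < b * |z.2| := by
      rw [div_lt_iff₀ hb] at habs; linarith [mul_comm b |z.2|]
    have h1 : S ^ 2 < (b * |z.2|) ^ 2 := by nlinarith
    have h2 : (b * |z.2|) ^ 2 = (b * z.2) ^ 2 := by
      rw [mul_pow, mul_pow, sq_abs]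
    nlinarith [sq_nonneg (a * z.1)]

private lemma ioi_to_interval (L : ℝ) (hL : 0 ≤ L) (g : ℝ → ℝ) (hg : Continuous g)
    (hg0 : ∀ u, L ≤ u → g u = 0) :
    (∫ u in Set.Ioi (0:ℝ), g u) = ∫ u in (0:ℝ)..L, g u := by
  have hunion : Set.Ioc (0:ℝ) L ∪ Set.Ioi L = Set.Ioi (0:ℝ) := Set.Ioc_union_Ioi_eq_Ioi hL
  have hEq : Set.EqOn g 0 (Set.Ioi L) := fun x hx => hg0 x (le_of_lt hx)
  have hint2 : IntegrableOn g (Set.Ioi L) := by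
    rw [integrableOn_congr_fun hEq measurableSet_Ioi]
    exact integrableOn_zero
  have hz : (∫ u in Set.Ioi L, g u) = 0 := by
    rw [setIntegral_congr_fun measurableSet_Ioi hEq]
    simp
  rw [← hunion, setIntegral_union (Set.Ioc_disjoint_Ioi le_rfl) measurableSet_Ioi
    (hg.integrableOn_Icc.mono_set Set.Ioc_subset_Icc_self) hint2, hz,
    intervalIntegral.integral_of_le hL]
  ring

private lemma lambert_inj : Set.InjOn (fun y : ℝ => y * Real.exp y) (Set.Ici (-1 : ℝ)) := by
  have hmono : StrictMonoOn (fun y : ℝ => y * Real.exp y) (Set.Ici (-1 : ℝ)) := by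
    apply strictMonoOn_of_deriv_pos (convex_Ici _)
    · exact (continuous_id.mul Real.continuous_exp).continuousOn
    · intro y hy
      rw [interior_Ici, Set.mem_Ioi] at hy
      have hd : HasDerivAt (fun y : ℝ => y * Real.exp y) (1 * Real.exp y + y * Real.exp y) y :=
        (hasDerivAt_id y).mul (Real.hasDerivAt_exp y)
      rw [hd.deriv]
      nlinarith [Real.exp_pos y]
  exact hmono.injOn

/-- Closed-form waterfilling capacity for the Gaussian Weyl symbol (Example 1, `r = 1`):
with `N₁(t,ω) = (θ²/(2π)) exp(γ⁻²t² + γ²ω²)`, if `ν` satisfies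
`∬ (ν - N₁)⁺ = 2πθ²·SNR`, then
`(1/(2π)) ∬ ½ ln⁺(ν/N₁) = (1/8)[W₀((4π·SNR - 1)/e) + 1]²`, where `W₀` is the principal
branch of the Lambert W function (`W₀(x) e^{W₀(x)} = x`, `W₀(x) ≥ -1`). -/
theorem heat_channel_capacity_closed_form
    (SNR θ γ : ℝ) (hSNR : 0 < SNR) (hθ : 0 < θ) (hγ : 0 < γ)
    (W0 : ℝ → ℝ)
    (hW0 : ∀ x : ℝ, -1 / Real.exp 1 ≤ x →
      W0 x * Real.exp (W0 x) = x ∧ -1 ≤ W0 x)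
    (N1 : ℝ × ℝ → ℝ)
    (hN1 : ∀ t ω : ℝ, N1 (t, ω) =
      θ ^ 2 / (2 * π) * Real.exp (γ ^ (-2 : ℤ) * t ^ 2 + γ ^ 2 * ω ^ 2))
    (ν : ℝ)
    (hν : (∫ z : ℝ × ℝ, max 0 (ν - N1 z)) = 2 * π * θ ^ 2 * SNR) :
    (1 / (2 * π)) * ∫ z : ℝ × ℝ, (1 / 2) * max 0 (Real.log (ν / N1 z)) =
      (1 / 8) * (W0 ((4 * π * SNR - 1) / Real.exp 1) + 1) ^ 2 := by
  have hπ : (0:ℝ) < π := Real.pi_pos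
  set A : ℝ := θ ^ 2 / (2 * π) with hAdef
  have hA : 0 < A := by positivity
  have hQ : ∀ z : ℝ × ℝ, N1 z = A * Real.exp ((γ⁻¹ * z.1) ^ 2 + (γ * z.2) ^ 2) := by
    intro z
    have harg : γ ^ (-2 : ℤ) * z.1 ^ 2 + γ ^ 2 * z.2 ^ 2
        = (γ⁻¹ * z.1) ^ 2 + (γ * z.2) ^ 2 := by
      have h2 : γ ^ (-2 : ℤ) = (γ⁻¹) ^ 2 := by
        rw [zpow_neg, inv_pow]
        norm_cast
      rw [h2]; ring
    calc N1 z = N1 (z.1, z.2) := rfl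
    _ = A * Real.exp ((γ⁻¹ * z.1) ^ 2 + (γ * z.2) ^ 2) := by rw [hN1 z.1 z.2, harg]
  -- ν > A
  have hνA : A < ν := by
    by_contra hle
    push_neg at hle
    have hzero : ∀ z : ℝ × ℝ, max 0 (ν - N1 z) = 0 := by
      intro z
      have h1 : A ≤ N1 z := by
        rw [hQ z]
        nlinarith [Real.one_le_exp (by positivity : (0:ℝ) ≤ (γ⁻¹ * z.1) ^ 2 + (γ * z.2) ^ 2)]
      exact max_eq_left (by linarith)
    rw [show (∫ z : ℝ × ℝ, max 0 (ν - N1 z)) = 0 by simp [hzero]] at hν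
    have hpos : (0:ℝ) < 2 * π * θ ^ 2 * SNR := by positivity
    linarith
  have hν0 : 0 < ν := lt_trans hA hνA
  set L : ℝ := Real.log (ν / A) with hLdef
  have hL : 0 < L := Real.log_pos ((one_lt_div hA).mpr hνA)
  have hkey : A * Real.exp L = ν := by
    rw [hLdef, Real.exp_log (by positivity)]
    field_simp
  -- master reduction
  have master : ∀ g : ℝ → ℝ, Continuous g → (∀ u, L ≤ u → g u = 0) →
      (∫ z : ℝ × ℝ, g ((γ⁻¹ * z.1) ^ 2 + (γ * z.2) ^ 2)) = π * ∫ u in (0:ℝ)..L, g u := by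
    intro g hg hg0
    have h1 := integrable_aux γ⁻¹ γ L (by positivity) hγ g hg hg0
    have h2 : Integrable (fun z : ℝ × ℝ => g (z.1 ^ 2 + z.2 ^ 2)) := by
      have := integrable_aux 1 1 L one_pos one_pos g hg hg0
      simpa using this
    rw [scale_key γ hγ.ne' g h1 h2, polar_key g, ioi_to_interval L hL.le g hg hg0]
  -- first integral
  have hg1c : Continuous fun u : ℝ => max 0 (ν - A * Real.exp u) := by fun_prop
  have hg10 : ∀ u, L ≤ u → max 0 (ν - A * Real.exp u) = 0 := by
    intro u hu
    have : ν ≤ A * Real.exp u := by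
      rw [← hkey]
      have := Real.exp_le_exp.mpr hu
      nlinarith
    exact max_eq_left (by linarith)
  have hI1 : (∫ z : ℝ × ℝ, max 0 (ν - N1 z)) = π * (ν * L - ν + A) := by
    have e1 : (∫ z : ℝ × ℝ, max 0 (ν - N1 z))
        = ∫ z : ℝ × ℝ, (fun u => max 0 (ν - A * Real.exp u)) ((γ⁻¹ * z.1) ^ 2 + (γ * z.2) ^ 2) := by
      congr 1; funext z; rw [hQ z]
    rw [e1, master _ hg1c hg10]
    have e2 : (∫ u in (0:ℝ)..L, max 0 (ν - A * Real.exp u))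
        = ∫ u in (0:ℝ)..L, (ν - A * Real.exp u) := by
      apply intervalIntegral.integral_congr
      intro u hu
      rw [Set.uIcc_of_le hL.le] at hu
      have : A * Real.exp u ≤ ν := by
        rw [← hkey]
        have := Real.exp_le_exp.mpr hu.2
        nlinarith
      exact max_eq_right (by linarith)
    rw [e2, intervalIntegral.integral_sub intervalIntegrable_const
      ((by fun_prop : Continuous fun u : ℝ => A * Real.exp u).intervalIntegrable _ _),
      intervalIntegral.integral_const, intervalIntegral.integral_const_mul,
      integral_exp]
    simp only [smul_eq_mul, Real.exp_zero]
    nlinarith [hkey]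
  -- the waterfilling equation
  have hEqn : ν * L - ν + A = 4 * π * A * SNR := by
    have hθA : θ ^ 2 = 2 * π * A := by
      rw [hAdef]; field_simp
    rw [hI1, hθA] at hν
    have := hν
    field_simp at this ⊢
    nlinarith [this, hπ]
  -- second integral
  have hg2c : Continuous fun u : ℝ => max 0 (L - u) := by fun_prop
  have hg20 : ∀ u, L ≤ u → max 0 (L - u) = 0 := fun u hu => max_eq_left (by linarith)
  have hlog : ∀ z : ℝ × ℝ, Real.log (ν / N1 z)
      = L - ((γ⁻¹ * z.1) ^ 2 + (γ * z.2) ^ 2) := by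
    intro z
    rw [hQ z, Real.log_div hν0.ne' (by positivity), Real.log_mul hA.ne' (Real.exp_ne_zero _),
      Real.log_exp, hLdef, Real.log_div hν0.ne' hA.ne']
    ring
  have hI2 : (∫ z : ℝ × ℝ, (1 / 2) * max 0 (Real.log (ν / N1 z)))
      = (1 / 2) * (π * (L ^ 2 / 2)) := by
    rw [MeasureTheory.integral_const_mul]
    congr 1
    have e1 : (∫ z : ℝ × ℝ, max 0 (Real.log (ν / N1 z)))
        = ∫ z : ℝ × ℝ, (fun u => max 0 (L - u)) ((γ⁻¹ * z.1) ^ 2 + (γ * z.2) ^ 2) := by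
      congr 1; funext z; rw [hlog z]
    rw [e1, master _ hg2c hg20]
    have e2 : (∫ u in (0:ℝ)..L, max 0 (L - u)) = ∫ u in (0:ℝ)..L, (L - u) := by
      apply intervalIntegral.integral_congr
      intro u hu
      rw [Set.uIcc_of_le hL.le] at hu
      exact max_eq_right (by linarith [hu.2])
    rw [e2, intervalIntegral.integral_sub intervalIntegrable_const
      intervalIntegral.intervalIntegrable_id, intervalIntegral.integral_const, integral_id]
    simp only [smul_eq_mul]
    ring
  -- Lambert W identification
  set x : ℝ := (4 * π * SNR - 1) / Real.exp 1 with hxdef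
  have hxge : -1 / Real.exp 1 ≤ x := by
    rw [hxdef]
    exact (div_le_div_iff_of_pos_right (Real.exp_pos 1)).mpr (by nlinarith)
  obtain ⟨hWeq, hWge⟩ := hW0 x hxge
  have hLx : (L - 1) * Real.exp (L - 1) = x := by
    have h1 : Real.exp L * (L - 1) = 4 * π * SNR - 1 := by
      have hνL : ν = A * Real.exp L := hkey.symm
      rw [hνL] at hEqn
      have hEq2 : A * (Real.exp L * (L - 1) - (4 * π * SNR - 1)) = 0 := by
        linear_combination hEqn
      have h3 := (mul_eq_zero.mp hEq2).resolve_left hA.ne'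
      linarith
    rw [Real.exp_sub, hxdef, ← h1]
    field_simp
  have hWL : W0 x = L - 1 := by
    apply lambert_inj (Set.mem_Ici.mpr hWge) (Set.mem_Ici.mpr (by linarith : (-1:ℝ) ≤ L - 1))
    simp only
    rw [hWeq, hLx]
  rw [hI2, hWL]
  field_simp
  ring
end

section
/- Let SDR ≥ 1, σ > 0, γ > 0, and define R(λ) = (1/(2π)) ∬_{ℝ²} max{0, (1/2) ln(Φ₁(t,ω)/λ)} dt dω and D(λ) = ∬_{ℝ²} min{λ, Φ₁(t,ω)} dt dω where Φ₁(t,ω) = (σ²/(2π)) exp(-(γ^{-2}t² + γ²ω²)). If λ is chosen so that D(λ) = E/SDR with E = ∬ Φ₁ dt dω = σ²/2, then R(λ) = (1/8)[W_{-1}(-1/(e·SDR)) + 1]², where W_{-1} is the lower branch of the Lambert W function. -/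
open MeasureTheory Real
open Set



lemma disk_vol (C : ℝ) :
    volume {z : ℝ × ℝ | z.1 ^ 2 + z.2 ^ 2 < C} = ENNReal.ofReal (π * C) := by
  rcases le_or_gt C 0 with hC | hC
  · have h1 : {z : ℝ × ℝ | z.1 ^ 2 + z.2 ^ 2 < C} = ∅ := by
      ext z
      simp only [mem_setOf_eq, mem_empty_iff_false, iff_false, not_lt]
      nlinarith [sq_nonneg z.1, sq_nonneg z.2]
    rw [h1, measure_empty, Eq.comm, ENNReal.ofReal_eq_zero]
    nlinarith [Real.pi_pos]
  · have hmeas : MeasurableSet {z : ℝ × ℝ | z.1 ^ 2 + z.2 ^ 2 < C} :=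
      measurableSet_lt (by fun_prop) measurable_const
    have h2 : Complex.measurableEquivRealProd ⁻¹' {z : ℝ × ℝ | z.1 ^ 2 + z.2 ^ 2 < C}
        = Metric.ball (0 : ℂ) (Real.sqrt C) := by
      ext w
      simp only [mem_preimage, Metric.mem_ball, Complex.dist_eq, sub_zero, mem_setOf_eq,
        Complex.measurableEquivRealProd_apply]
      rw [Real.lt_sqrt (norm_nonneg w), Complex.sq_norm, Complex.normSq_apply]
      ring_nf
    have h3 := Complex.volume_preserving_equiv_real_prod.measure_preimage
      hmeas.nullMeasurableSet
    rw [h2] at h3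
    rw [← h3, Complex.volume_ball]
    rw [← ENNReal.ofReal_pow (Real.sqrt_nonneg C), Real.sq_sqrt hC.le,
      ← NNReal.coe_real_pi, ENNReal.ofReal_coe_nnreal.symm, ← ENNReal.ofReal_mul hC.le]
    ring_nf


lemma mp_scale (γ : ℝ) (hγ : 0 < γ) :
    MeasurePreserving (fun z : ℝ × ℝ => (γ⁻¹ * z.1, γ * z.2)) volume volume := by
  have hmeas : Measurable (fun z : ℝ × ℝ => (γ⁻¹ * z.1, γ * z.2)) := by fun_prop
  refine ⟨hmeas, ?_⟩
  rw [Measure.volume_eq_prod]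
  refine (Measure.prod_eq (μ := (volume : Measure ℝ)) (ν := (volume : Measure ℝ)) fun s t hs ht => ?_).symm
  rw [Measure.map_apply hmeas (hs.prod ht)]
  have hpre : (fun z : ℝ × ℝ => (γ⁻¹ * z.1, γ * z.2)) ⁻¹' (s ×ˢ t)
      = ((γ⁻¹ * ·) ⁻¹' s) ×ˢ ((γ * ·) ⁻¹' t) := rfl
  rw [hpre, Measure.prod_prod, Real.volume_preimage_mul_left (inv_ne_zero hγ.ne') s,
    Real.volume_preimage_mul_left hγ.ne' t, inv_inv,
    abs_of_pos hγ, abs_of_pos (inv_pos.mpr hγ)]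
  rw [show (ENNReal.ofReal γ * volume s) * (ENNReal.ofReal γ⁻¹ * volume t)
      = (ENNReal.ofReal γ * ENNReal.ofReal γ⁻¹) * (volume s * volume t) by ring,
    ← ENNReal.ofReal_mul hγ.le, mul_inv_cancel₀ hγ.ne']
  simp

lemma ellipse_vol (γ : ℝ) (hγ : 0 < γ) (C : ℝ) :
    volume {z : ℝ × ℝ | γ ^ (-2 : ℤ) * z.1 ^ 2 + γ ^ 2 * z.2 ^ 2 < C}
      = ENNReal.ofReal (π * C) := by
  have hmeas : MeasurableSet {z : ℝ × ℝ | z.1 ^ 2 + z.2 ^ 2 < C} :=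
    measurableSet_lt (by fun_prop) measurable_const
  have h := (mp_scale γ hγ).measure_preimage hmeas.nullMeasurableSet
  have hset : (fun z : ℝ × ℝ => (γ⁻¹ * z.1, γ * z.2)) ⁻¹' {z : ℝ × ℝ | z.1 ^ 2 + z.2 ^ 2 < C}
      = {z : ℝ × ℝ | γ ^ (-2 : ℤ) * z.1 ^ 2 + γ ^ 2 * z.2 ^ 2 < C} := by
    ext z
    have h2 : γ ^ (-2 : ℤ) = γ⁻¹ ^ 2 := by
      rw [inv_pow, ← zpow_natCast γ 2, ← zpow_neg]
      norm_num
    simp only [mem_preimage, mem_setOf_eq, h2]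
    ring_nf
  rw [hset] at h
  rw [h, disk_vol]


lemma lint_log (A m : ℝ) (hA : 0 < A) (hm : 0 < m) (hmA : m ≤ A) :
    ∫⁻ u in Ioo 0 m, ENNReal.ofReal (π * Real.log (A / u))
      = ENNReal.ofReal (π * (m * (Real.log (A / m) + 1))) := by
  set f : ℝ → ℝ := fun u => π * Real.log (A / u) with hf
  set F : ℝ → ℝ := fun u => π * (u * Real.log A - u * Real.log u + u) with hF
  have hder : ∀ u ∈ Ioo 0 m, HasDerivAt F (f u) u := by
    intro u hu
    have h1 : HasDerivAt (fun u : ℝ => u * Real.log u) (Real.log u + 1) u :=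
      Real.hasDerivAt_mul_log hu.1.ne'
    have h2 : HasDerivAt (fun u : ℝ => u * Real.log A - u * Real.log u + u)
        (1 * Real.log A - (Real.log u + 1) + 1) u :=
      (((hasDerivAt_id u).mul_const (Real.log A)).sub h1).add (hasDerivAt_id u)
    have h3 := h2.const_mul π
    refine h3.congr_deriv ?_
    rw [hf]
    simp only [Real.log_div hA.ne' hu.1.ne']
    ring
  have hcont : ContinuousOn F (Icc 0 m) := by
    have : Continuous F := by
      rw [hF]
      exact continuous_const.mul
        (((continuous_id.mul continuous_const).sub Real.continuous_mul_log).add continuous_id)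
    exact this.continuousOn
  have hpos : ∀ u ∈ Ioo 0 m, 0 ≤ f u := by
    intro u hu
    have h1 : (1 : ℝ) ≤ A / u := (one_le_div hu.1).mpr (hu.2.le.trans hmA)
    have := Real.log_nonneg h1
    positivity
  have hint : IntegrableOn f (Ioc 0 m) :=
    intervalIntegral.integrableOn_deriv_of_nonneg hcont hder hpos
  have hnn : 0 ≤ᵐ[volume.restrict (Ioc 0 m)] f := by
    filter_upwards [ae_restrict_mem measurableSet_Ioc] with u hu
    rcases eq_or_lt_of_le hu.2 with h | h
    · have h1 : (1 : ℝ) ≤ A / u := (one_le_div hu.1).mpr (h ▸ hmA)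
      have := Real.log_nonneg h1
      positivity
    · exact hpos u ⟨hu.1, h⟩
  rw [setLIntegral_congr Ioo_ae_eq_Ioc, ← ofReal_integral_eq_lintegral_ofReal hint hnn]
  congr 1
  have hIoc : ∫ u in Ioc 0 m, f u = ∫ u in (0)..m, f u :=
    (intervalIntegral.integral_of_le hm.le).symm
  rw [hIoc, intervalIntegral.integral_eq_sub_of_hasDerivAt_of_le hm.le hcont hder
    ((intervalIntegrable_iff_integrableOn_Ioc_of_le hm.le).mpr hint)]
  rw [hF]
  simp only [Real.log_zero, Real.log_div hA.ne' hm.ne']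
  ring


lemma lint_lin (c : ℝ) (hc : 0 ≤ c) :
    ∫⁻ u in Ioi (0 : ℝ), ENNReal.ofReal (π * (c - 2 * u))
      = ENNReal.ofReal (π * c ^ 2 / 4) := by
  have hsplit : Ioc (0 : ℝ) (c / 2) ∪ Ioi (c / 2) = Ioi 0 :=
    Ioc_union_Ioi_eq_Ioi (by linarith)
  rw [← hsplit, lintegral_union measurableSet_Ioi (Ioc_disjoint_Ioi le_rfl)]
  have h2 : ∫⁻ u in Ioi (c / 2), ENNReal.ofReal (π * (c - 2 * u)) = 0 := by
    rw [setLIntegral_congr_fun (f := fun u => ENNReal.ofReal (π * (c - 2 * u))) measurableSet_Ioi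
      (fun u (hu : c / 2 < u) =>
        (ENNReal.ofReal_eq_zero.mpr (by nlinarith [Real.pi_pos]))), lintegral_zero]
  rw [h2, add_zero]
  set f : ℝ → ℝ := fun u => π * (c - 2 * u) with hf
  set F : ℝ → ℝ := fun u => π * (c * u - u ^ 2) with hF
  have hder : ∀ u ∈ Ioo (0 : ℝ) (c / 2), HasDerivAt F (f u) u := by
    intro u _
    have h2 : HasDerivAt (fun u : ℝ => c * u - u ^ 2) (c - 2 * u) u := by
      exact (((hasDerivAt_id u).const_mul c).sub (hasDerivAt_pow 2 u)).congr_deriv (by norm_num)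
    have := h2.const_mul π
    convert this using 1
  have hcont : Continuous f := by fun_prop
  have hint : IntegrableOn f (Ioc 0 (c / 2)) := hcont.integrableOn_Ioc
  have hnn : 0 ≤ᵐ[volume.restrict (Ioc 0 (c / 2))] f := by
    filter_upwards [ae_restrict_mem measurableSet_Ioc] with u hu
    have h3 : u ≤ c / 2 := hu.2
    have := Real.pi_pos
    simp only [Pi.zero_apply, hf]
    nlinarith
  rw [← ofReal_integral_eq_lintegral_ofReal hint hnn]
  congr 1
  have hIoc : ∫ u in Ioc 0 (c / 2), f u = ∫ u in (0)..(c / 2), f u :=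
    (intervalIntegral.integral_of_le (by linarith)).symm
  have hcontF : ContinuousOn F (Icc 0 (c / 2)) := by
    have : Continuous F := by fun_prop
    exact this.continuousOn
  rw [hIoc, intervalIntegral.integral_eq_sub_of_hasDerivAt_of_le (by linarith) hcontF hder
    ((intervalIntegrable_iff_integrableOn_Ioc_of_le (by linarith)).mpr hint)]
  rw [hF]
  ring

lemma w_uniq {a b : ℝ} (ha : a ≤ -1) (hb : b ≤ -1) (h : a * Real.exp a = b * Real.exp b) :
    a = b := by
  have hanti : StrictAntiOn (fun x : ℝ => x * Real.exp x) (Iic (-1)) := by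
    apply strictAntiOn_of_deriv_neg (convex_Iic _) (Continuous.continuousOn (by fun_prop))
    intro x hx
    rw [interior_Iic] at hx
    have hd : HasDerivAt (fun x : ℝ => x * Real.exp x) (1 * Real.exp x + x * Real.exp x) x :=
      (hasDerivAt_id x).mul (Real.hasDerivAt_exp x)
    rw [hd.deriv]
    have h1 : (0 : ℝ) < Real.exp x := Real.exp_pos x
    have h2 : x < -1 := hx
    nlinarith
  exact hanti.injOn ha hb h


/-- Closed-form reverse-waterfilling rate for the Gaussian symbol (Example 3, `r = 1`):
with `Φ₁(t,ω) = (σ²/(2π)) exp(-(γ⁻²t² + γ²ω²))` and total mean energy `E = ∬ Φ₁ = σ²/2`,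
if `λ` satisfies `∬ min{λ, Φ₁} = E/SDR`, then
`(1/(2π)) ∬ max{0, ½ ln(Φ₁/λ)} = (1/8)[W₋₁(-1/(e·SDR)) + 1]²`, where `W₋₁` is the lower
branch of the Lambert W function (`W₋₁(x) e^{W₋₁(x)} = x`, `W₋₁(x) ≤ -1` on `[-1/e, 0)`). -/
theorem heat_source_rate_distortion_closed_form
    (SDR σ γ : ℝ) (hSDR : 1 ≤ SDR) (hσ : 0 < σ) (hγ : 0 < γ)
    (Wm1 : ℝ → ℝ)
    (hWm1 : ∀ x : ℝ, -1 / Real.exp 1 ≤ x → x < 0 →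
      Wm1 x * Real.exp (Wm1 x) = x ∧ Wm1 x ≤ -1)
    (Φ1 : ℝ × ℝ → ℝ)
    (hΦ1 : ∀ t ω : ℝ, Φ1 (t, ω) =
      σ ^ 2 / (2 * π) * Real.exp (-(γ ^ (-2 : ℤ) * t ^ 2 + γ ^ 2 * ω ^ 2)))
    (lam : ℝ)
    (hlam : (∫ z : ℝ × ℝ, min lam (Φ1 z)) = (σ ^ 2 / 2) / SDR) :
    (1 / (2 * π)) * ∫ z : ℝ × ℝ, max 0 ((1 / 2) * Real.log (Φ1 z / lam)) =
      (1 / 8) * (Wm1 (-1 / (Real.exp 1 * SDR)) + 1) ^ 2 := by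
  have hπ := Real.pi_pos
  have hSDR0 : (0 : ℝ) < SDR := lt_of_lt_of_le one_pos hSDR
  set A : ℝ := σ ^ 2 / (2 * π) with hAdef
  have hA0 : 0 < A := by positivity
  set g : ℝ × ℝ → ℝ :=
    fun z => A * Real.exp (-(γ ^ (-2 : ℤ) * z.1 ^ 2 + γ ^ 2 * z.2 ^ 2)) with hgdef
  have hΦfun : Φ1 = g := by
    funext z
    have h := hΦ1 z.1 z.2
    rwa [Prod.mk.eta] at h
  rw [hΦfun] at hlam ⊢
  have hgpos : ∀ z, 0 < g z := by
    intro z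
    rw [hgdef]
    positivity
  have hgle : ∀ z, g z ≤ A := by
    intro z
    have hq0 : (0 : ℝ) ≤ γ ^ (-2 : ℤ) * z.1 ^ 2 + γ ^ 2 * z.2 ^ 2 := by positivity
    have h1 : Real.exp (-(γ ^ (-2 : ℤ) * z.1 ^ 2 + γ ^ 2 * z.2 ^ 2)) ≤ 1 :=
      Real.exp_le_one_iff.mpr (by linarith)
    have h2 : g z = A * Real.exp (-(γ ^ (-2 : ℤ) * z.1 ^ 2 + γ ^ 2 * z.2 ^ 2)) := rfl
    rw [h2]
    nlinarith
  have hgmeas : Measurable g := by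
    rw [hgdef]; fun_prop
  -- σ²/2 = π * A
  have hE : σ ^ 2 / 2 = π * A := by
    rw [hAdef]; field_simp
  -- dispose of lam ≤ 0
  rcases le_or_gt lam 0 with hlamle | hlam0
  · exfalso
    have h1 : (∫ z : ℝ × ℝ, min lam (g z)) = ∫ _z : ℝ × ℝ, lam :=
      integral_congr_ae (ae_of_all _ fun z => min_eq_left (hlamle.trans (hgpos z).le))
    have h2 : (volume : Measure (ℝ × ℝ)) univ = ⊤ := by
      rw [Measure.volume_eq_prod, ← univ_prod_univ, Measure.prod_prod, Real.volume_univ]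
      simp
    rw [h1, integral_const, measureReal_def, h2] at hlam
    simp only [ENNReal.toReal_top, zero_smul] at hlam
    have h3 : 0 < σ ^ 2 / 2 / SDR := by positivity
    linarith
  -- superlevel set volumes
  have hlevel : ∀ u : ℝ, 0 < u →
      volume {z : ℝ × ℝ | u < g z} = ENNReal.ofReal (π * Real.log (A / u)) := by
    intro u hu
    have hset : {z : ℝ × ℝ | u < g z}
        = {z : ℝ × ℝ | γ ^ (-2 : ℤ) * z.1 ^ 2 + γ ^ 2 * z.2 ^ 2 < Real.log (A / u)} := by
      ext z
      simp only [hgdef, mem_setOf_eq]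
      set t : ℝ := γ ^ (-2 : ℤ) * z.1 ^ 2 + γ ^ 2 * z.2 ^ 2 with ht
      rw [← Real.log_lt_log_iff hu (by positivity),
        Real.log_mul hA0.ne' (Real.exp_ne_zero _), Real.log_exp,
        Real.log_div hA0.ne' hu.ne']
      constructor <;> intro <;> linarith
    rw [hset, ellipse_vol γ hγ]
  -- distortion integral
  have hDmeas : Measurable fun z : ℝ × ℝ => min lam (g z) := measurable_const.min hgmeas
  have hD : (∫ z : ℝ × ℝ, min lam (g z))
      = (∫⁻ z : ℝ × ℝ, ENNReal.ofReal (min lam (g z))).toReal :=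
    integral_eq_lintegral_of_nonneg_ae
      (ae_of_all _ fun z => le_min hlam0.le (hgpos z).le) hDmeas.aestronglyMeasurable
  have hDlin : (∫⁻ z : ℝ × ℝ, ENNReal.ofReal (min lam (g z)))
      = ∫⁻ u in Ioi (0 : ℝ), volume {z : ℝ × ℝ | u < min lam (g z)} :=
    lintegral_eq_lintegral_meas_lt volume
      (ae_of_all _ fun z => le_min hlam0.le (hgpos z).le) hDmeas.aemeasurable
  have hDset : (∫⁻ u in Ioi (0 : ℝ), volume {z : ℝ × ℝ | u < min lam (g z)})
      = ∫⁻ u in Ioo (0 : ℝ) lam, ENNReal.ofReal (π * Real.log (A / u)) := by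
    have hind : ∀ u ∈ Ioi (0 : ℝ), volume {z : ℝ × ℝ | u < min lam (g z)}
        = (Ioo (0 : ℝ) lam).indicator
            (fun u => ENNReal.ofReal (π * Real.log (A / u))) u := by
      intro u hu
      rcases lt_or_ge u lam with h | h
      · rw [indicator_of_mem (mem_Ioo.mpr ⟨mem_Ioi.mp hu, h⟩)]
        have hs : {z : ℝ × ℝ | u < min lam (g z)} = {z : ℝ × ℝ | u < g z} := by
          ext z
          simp only [mem_setOf_eq, lt_min_iff]
          exact and_iff_right h
        rw [hs, hlevel u hu]
      · rw [indicator_of_notMem (fun hmem => absurd (mem_Ioo.mp hmem).2 (not_lt.mpr h))]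
        have hs : {z : ℝ × ℝ | u < min lam (g z)} = (∅ : Set (ℝ × ℝ)) := by
          ext z
          simp only [mem_setOf_eq, lt_min_iff, mem_empty_iff_false, iff_false, not_and]
          intro hcon
          exact absurd hcon (not_lt.mpr h)
        rw [hs, measure_empty]
    rw [setLIntegral_congr_fun measurableSet_Ioi hind,
      lintegral_indicator measurableSet_Ioo, Measure.restrict_restrict measurableSet_Ioo,
      inter_eq_self_of_subset_left Ioo_subset_Ioi_self]
  rcases le_or_gt lam A with hlamA | hAlam
  · -- main case : 0 < lam ≤ A
    set c : ℝ := Real.log (A / lam) with hcdef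
    have hc0 : 0 ≤ c := Real.log_nonneg ((one_le_div hlam0).mpr hlamA)
    have hexpc : Real.exp c = A / lam := Real.exp_log (div_pos hA0 hlam0)
    -- distortion value
    have hDval : (∫ z : ℝ × ℝ, min lam (g z)) = π * (lam * (c + 1)) := by
      rw [hD, hDlin, hDset, lint_log A lam hA0 hlam0 hlamA, ENNReal.toReal_ofReal (by positivity)]
    rw [hDval, hE] at hlam
    -- hlam : π * (lam * (c+1)) = π * A / SDR
    have hkey : (c + 1) * SDR = Real.exp c := by
      have h2 : A = lam * Real.exp c := by
        rw [hexpc]; field_simp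
      have h1 : π * (lam * ((c + 1) * SDR)) = π * (lam * Real.exp c) := by
        rw [← h2]
        calc π * (lam * ((c + 1) * SDR)) = (π * (lam * (c + 1))) * SDR := by ring
          _ = (π * A / SDR) * SDR := by rw [hlam]
          _ = π * A := by field_simp
      exact mul_left_cancel₀ hlam0.ne' (mul_left_cancel₀ hπ.ne' h1)
    -- Lambert W identification
    have hwe : (-(c + 1)) * Real.exp (-(c + 1)) = -1 / (Real.exp 1 * SDR) := by
      have he1 : Real.exp (-(c + 1)) = (Real.exp c * Real.exp 1)⁻¹ := by
        rw [← Real.exp_add, ← Real.exp_neg]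
      have hc1 : c + 1 = Real.exp c / SDR := by
        rw [eq_div_iff hSDR0.ne']; exact hkey
      rw [he1, hc1]
      have hec := (Real.exp_pos c).ne'
      have he := (Real.exp_pos 1).ne'
      field_simp
      try ring
    obtain ⟨hW1, hW2⟩ := hWm1 (-1 / (Real.exp 1 * SDR))
      (by
        have he := Real.exp_pos 1
        have h1 : 1 / (Real.exp 1 * SDR) ≤ 1 / Real.exp 1 :=
          one_div_le_one_div_of_le he (le_mul_of_one_le_right he.le hSDR)
        have h2 : -1 / Real.exp 1 = -(1 / Real.exp 1) := by ring
        have h3 : -1 / (Real.exp 1 * SDR) = -(1 / (Real.exp 1 * SDR)) := by ring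
        rw [h2, h3]
        linarith)
      (div_neg_of_neg_of_pos (by norm_num) (by positivity))
    have hWc : Wm1 (-1 / (Real.exp 1 * SDR)) = -(c + 1) :=
      w_uniq hW2 (by linarith) (hW1.trans hwe.symm)
    rw [hWc]
    -- rate integral
    have hRmeas : Measurable fun z : ℝ × ℝ => max 0 ((1 / 2) * Real.log (g z / lam)) :=
      measurable_const.max (((hgmeas.div_const lam).log).const_mul (1 / 2))
    have hR : (∫ z : ℝ × ℝ, max 0 ((1 / 2) * Real.log (g z / lam)))
        = (∫⁻ z : ℝ × ℝ, ENNReal.ofReal (max 0 ((1 / 2) * Real.log (g z / lam)))).toReal :=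
      integral_eq_lintegral_of_nonneg_ae
        (ae_of_all _ fun z => le_max_left _ _) hRmeas.aestronglyMeasurable
    have hRlin : (∫⁻ z : ℝ × ℝ, ENNReal.ofReal (max 0 ((1 / 2) * Real.log (g z / lam))))
        = ∫⁻ u in Ioi (0 : ℝ),
            volume {z : ℝ × ℝ | u < max 0 ((1 / 2) * Real.log (g z / lam))} :=
      lintegral_eq_lintegral_meas_lt volume
        (ae_of_all _ fun z => le_max_left _ _) hRmeas.aemeasurable
    have hRset : (∫⁻ u in Ioi (0 : ℝ),
          volume {z : ℝ × ℝ | u < max 0 ((1 / 2) * Real.log (g z / lam))})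
        = ∫⁻ u in Ioi (0 : ℝ), ENNReal.ofReal (π * (c - 2 * u)) := by
      apply setLIntegral_congr_fun measurableSet_Ioi
      intro u hu
      have hu0 : (0 : ℝ) < u := hu
      have hs : {z : ℝ × ℝ | u < max 0 ((1 / 2) * Real.log (g z / lam))}
          = {z : ℝ × ℝ | lam * Real.exp (2 * u) < g z} := by
        ext z
        simp only [mem_setOf_eq, lt_max_iff]
        have hgz := hgpos z
        constructor
        · rintro (h | h)
          · linarith
          · have h2 : 2 * u < Real.log (g z / lam) := by linarith
            have h3 := (Real.lt_log_iff_exp_lt (div_pos hgz hlam0)).mp h2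
            rw [lt_div_iff₀ hlam0] at h3
            linarith [h3]
        · intro h
          right
          have h3 : Real.exp (2 * u) < g z / lam := by
            rw [lt_div_iff₀ hlam0]
            linarith [h]
          have h2 := (Real.lt_log_iff_exp_lt (div_pos hgz hlam0)).mpr h3
          linarith
      beta_reduce
      rw [hs, hlevel (lam * Real.exp (2 * u)) (by positivity)]
      congr 1
      rw [Real.log_div hA0.ne' (by positivity),
        Real.log_mul hlam0.ne' (Real.exp_ne_zero _), Real.log_exp, hcdef,
        Real.log_div hA0.ne' hlam0.ne']
      ring
    have hRval : (∫ z : ℝ × ℝ, max 0 ((1 / 2) * Real.log (g z / lam)))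
        = π * c ^ 2 / 4 := by
      rw [hR, hRlin, hRset, lint_lin c hc0, ENNReal.toReal_ofReal (by positivity)]
    rw [hRval]
    have hfin : 1 / (2 * π) * (π * c ^ 2 / 4) = 1 / 8 * (-(c + 1) + 1) ^ 2 := by
      have h1 : (-(c + 1) + 1 : ℝ) ^ 2 = c ^ 2 := by ring
      rw [h1]
      field_simp
      ring
    exact hfin
  · -- degenerate case : A < lam, forcing SDR = 1
    have hDval : (∫ z : ℝ × ℝ, min lam (g z)) = π * A := by
      rw [hD, hDlin, hDset]
      have hsplit : Ioo (0 : ℝ) lam = Ioo 0 A ∪ Ico A lam :=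
        (Ioo_union_Ico_eq_Ioo hA0 hAlam.le).symm
      have hdisj : Disjoint (Ioo (0 : ℝ) A) (Ico A lam) := by
        rw [Set.disjoint_left]
        rintro x hx1 hx2
        exact absurd hx1.2 (not_lt.mpr hx2.1)
      rw [hsplit, lintegral_union measurableSet_Ico hdisj]
      have hval : ∀ u ∈ Ico A lam, ENNReal.ofReal (π * Real.log (A / u)) = 0 := by
        intro u hu
        have hu0 : (0 : ℝ) < u := lt_of_lt_of_le hA0 hu.1
        exact ENNReal.ofReal_eq_zero.mpr
          (mul_nonpos_of_nonneg_of_nonpos hπ.le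
            (Real.log_nonpos (le_of_lt (div_pos hA0 hu0)) ((div_le_one hu0).mpr hu.1)))
      have hz : (∫⁻ u in Ico A lam, ENNReal.ofReal (π * Real.log (A / u))) = 0 := by
        rw [setLIntegral_congr_fun measurableSet_Ico hval, lintegral_zero]
      rw [hz, add_zero, lint_log A A hA0 hA0 le_rfl, div_self hA0.ne', Real.log_one,
        ENNReal.toReal_ofReal (by positivity)]
      ring
    rw [hDval, hE] at hlam
    have hSDR1 : SDR = 1 := by
      have h1 : π * A * SDR = π * A * 1 := by
        calc π * A * SDR = (π * A / SDR) * SDR := by rw [← hlam]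
          _ = π * A := div_mul_cancel₀ _ hSDR0.ne'
          _ = π * A * 1 := (mul_one _).symm
      exact mul_left_cancel₀ (by positivity : (π * A : ℝ) ≠ 0) h1
    rw [hSDR1]
    obtain ⟨hW1, hW2⟩ := hWm1 (-1 / (Real.exp 1 * 1))
      (le_of_eq (by rw [mul_one]))
      (div_neg_of_neg_of_pos (by norm_num) (by positivity))
    have hWval : Wm1 (-1 / (Real.exp 1 * 1)) = -1 := by
      apply w_uniq hW2 le_rfl
      rw [hW1, mul_one, Real.exp_neg]
      field_simp
    rw [hWval]
    have hzero : (fun z : ℝ × ℝ => max 0 ((1 / 2) * Real.log (g z / lam)))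
        = fun _ => (0 : ℝ) := by
      funext z
      have h1 : g z / lam < 1 := (div_lt_one hlam0).mpr (lt_of_le_of_lt (hgle z) hAlam)
      have h2 : Real.log (g z / lam) < 0 := Real.log_neg (div_pos (hgpos z) hlam0) h1
      exact max_eq_left (by linarith)
    rw [hzero]
    simp
end
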